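/- Let b ≥ 1 be an integer, let p be a sensor-deployment distribution, let X_1, …, X_n be i.i.d. random variables with P(X_j = k) = p_k, let N_k be the count of samples equal to k, and let e_n = P( ¬(0 < N_0 < N_1 < … < N_{2b}) ). Then e_n ≤ (2b+1) · (1 − d_min(p)²)^n. -/

import Mathlib

open Finset Real MeasureTheory ProbabilityTheory

/-- The "gap" vector: `d 0 = √p₀`, `d i = √pᵢ - √p_{i-1}` for `i ≥ 1`. -/
noncomputable def dvec (p : ℕ → ℝ) (i : ℕ) : ℝ :=
  if i = 0 then Real.sqrt (p 0) else Real.sqrt (p i) - Real.sqrt (p (i - 1))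

/-- `d_min(p) = min_{0 ≤ i ≤ 2b} d_i(p)`. -/
noncomputable def dmin (b : ℕ) (p : ℕ → ℝ) : ℝ :=
  (Finset.range (2 * b + 1)).inf' (Finset.nonempty_range_iff.mpr (by omega)) (dvec p)

/-- A sensor-deployment distribution: `0 < p₀ < p₁ < ⋯ < p_{2b}` and `∑ pᵢ = 1`. -/
def IsSensorDist (b : ℕ) (p : ℕ → ℝ) : Prop :=
  0 < p 0 ∧ (∀ i, i < 2 * b → p i < p (i + 1)) ∧ ∑ i ∈ Finset.range (2 * b + 1), p i = 1

lemma sensor_pos {b : ℕ} {p : ℕ → ℝ} (hp : IsSensorDist b p) : ∀ k ≤ 2 * b, 0 < p k := by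
  intro k hk
  induction k with
  | zero => exact hp.1
  | succ m ih =>
      have hm : m < 2 * b := by omega
      exact (ih (by omega)).trans (hp.2.1 m hm)

lemma sensor_le_one {b : ℕ} {p : ℕ → ℝ} (hp : IsSensorDist b p) : ∀ k ≤ 2 * b, p k ≤ 1 := by
  intro k hk
  rw [← hp.2.2]
  exact Finset.single_le_sum (f := p) (fun i hi => (sensor_pos hp i (by simpa using Nat.lt_succ_iff.mp (Finset.mem_range.mp hi))).le) (Finset.mem_range.mpr (by omega))

lemma sensor_pair_le_one {b : ℕ} {p : ℕ → ℝ} (hb : 1 ≤ b) (hp : IsSensorDist b p)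
    {k : ℕ} (hk1 : 1 ≤ k) (hk2 : k ≤ 2 * b) : p (k - 1) + p k ≤ 1 := by
  have : ∑ i ∈ ({k - 1, k} : Finset ℕ), p i ≤ ∑ i ∈ Finset.range (2 * b + 1), p i := by
    apply Finset.sum_le_sum_of_subset_of_nonneg
    · intro x hx
      simp only [Finset.mem_insert, Finset.mem_singleton] at hx
      rcases hx with h | h <;> simp [Finset.mem_range] <;> omega
    · intro i hi _
      exact (sensor_pos hp i (by simpa using Nat.lt_succ_iff.mp (Finset.mem_range.mp hi))).le
  rw [hp.2.2] at this
  rwa [Finset.sum_insert (by simp; omega), Finset.sum_singleton] at this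

/-- Chernoff bound for a pair of values. -/
lemma chernoff_pair {Ω : Type*} [MeasurableSpace Ω] (μ : Measure Ω) [IsProbabilityMeasure μ]
    {n : ℕ} (X : Fin n → Ω → ℕ) (hXmeas : ∀ j, Measurable (X j))
    (hXindep : iIndepFun X μ)
    (u v : ℕ) (huv : u ≠ v) (q r : ℝ) (hq : 0 < q) (hqr : q < r) (hsum : q + r ≤ 1)
    (hqd : ∀ j, μ {ω | X j ω = u} = ENNReal.ofReal q)
    (hrd : ∀ j, μ {ω | X j ω = v} = ENNReal.ofReal r) :
    (μ {ω | (Finset.univ.filter fun j => X j ω = v).card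
        ≤ (Finset.univ.filter fun j => X j ω = u).card}).toReal
      ≤ (1 - (Real.sqrt r - Real.sqrt q) ^ 2) ^ n := by
  have hr : 0 < r := hq.trans hqr
  have hsq : 0 < Real.sqrt q := Real.sqrt_pos.mpr hq
  have hsr : 0 < Real.sqrt r := Real.sqrt_pos.mpr hr
  set t : ℝ := Real.log (Real.sqrt r / Real.sqrt q) with ht_def
  have ht : 0 ≤ t := Real.log_nonneg (by
    rw [le_div_iff₀ hsq]
    simpa using Real.sqrt_le_sqrt hqr.le)
  have het : Real.exp t = Real.sqrt r / Real.sqrt q := Real.exp_log (by positivity)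
  have hent : Real.exp (-t) = Real.sqrt q / Real.sqrt r := by
    rw [Real.exp_neg, het, inv_div]
  set g : ℕ → ℝ := fun k => (if k = u then 1 else 0) - (if k = v then 1 else 0) with hg_def
  set Y : Fin n → Ω → ℝ := fun j => g ∘ X j with hY_def
  have hYmeas : ∀ j, Measurable (Y j) := fun j => (measurable_from_nat).comp (hXmeas j)
  have hYindep : iIndepFun Y μ :=
    hXindep.comp (fun _ => g) (fun _ => measurable_from_nat)
  -- pointwise form of exp (t * Y j ω)
  have hpt : ∀ j ω, Real.exp (t * Y j ω)
      = if X j ω = u then Real.exp t else if X j ω = v then Real.exp (-t) else 1 := by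
    intro j ω
    by_cases h1 : X j ω = u
    · simp [hY_def, hg_def, h1, huv, Function.comp]
    · by_cases h2 : X j ω = v
      · simp [hY_def, hg_def, h1, h2, Ne.symm huv, Function.comp]
      · simp [hY_def, hg_def, h1, h2, Function.comp]
  -- mgf of each Y j
  have hmgf : ∀ j, mgf (Y j) μ t = 1 - (Real.sqrt r - Real.sqrt q) ^ 2 := by
    intro j
    have hA : MeasurableSet {ω | X j ω = u} := hXmeas j (measurableSet_singleton u)
    have hB : MeasurableSet {ω | X j ω = v} := hXmeas j (measurableSet_singleton v)
    have hAB : MeasurableSet ({ω | X j ω = u} ∪ {ω | X j ω = v}) := hA.union hB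
    have hfun : (fun ω => Real.exp (t * Y j ω))
        = (Set.indicator {ω | X j ω = u} (fun _ => Real.exp t)
            + Set.indicator {ω | X j ω = v} (fun _ => Real.exp (-t))
            + Set.indicator ({ω | X j ω = u} ∪ {ω | X j ω = v})ᶜ (fun _ => (1:ℝ))) := by
      funext ω
      simp only [Pi.add_apply]
      rw [hpt j ω]
      by_cases h1 : X j ω = u
      · have h2 : X j ω ≠ v := by rw [h1]; exact huv
        simp [Set.indicator_apply, h1, h2, huv]
      · by_cases h2 : X j ω = v
        · simp [Set.indicator_apply, h1, h2, Ne.symm huv]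
        · simp [Set.indicator_apply, h1, h2]
    have hi1 : Integrable (Set.indicator {ω | X j ω = u} (fun _ => Real.exp t)) μ :=
      (integrable_const _).indicator hA
    have hi2 : Integrable (Set.indicator {ω | X j ω = v} (fun _ => Real.exp (-t))) μ :=
      (integrable_const _).indicator hB
    have hi3 : Integrable (Set.indicator ({ω | X j ω = u} ∪ {ω | X j ω = v})ᶜ (fun _ => (1:ℝ))) μ :=
      (integrable_const _).indicator hAB.compl
    have hμC : μ (({ω | X j ω = u} ∪ {ω | X j ω = v})ᶜ) = 1 - ENNReal.ofReal (q + r) := by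
      rw [measure_compl hAB (measure_ne_top _ _)]
      rw [measure_union (by
        rw [Set.disjoint_left]
        intro ω h1 h2
        exact huv (h1.symm.trans h2)) hB]
      rw [hqd j, hrd j, measure_univ, ENNReal.ofReal_add hq.le hr.le]
    rw [mgf, hfun, integral_add' (hi1.add hi2) hi3, integral_add' hi1 hi2,
      integral_indicator_const _ hA, integral_indicator_const _ hB,
      integral_indicator_const _ hAB.compl, measureReal_def, measureReal_def,
      measureReal_def, hqd j, hrd j, hμC,
      ENNReal.toReal_ofReal hq.le, ENNReal.toReal_ofReal hr.le,
      ENNReal.toReal_sub_of_le (by simpa using ENNReal.ofReal_le_one.mpr hsum) ENNReal.one_ne_top]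
    rw [ENNReal.toReal_one, ENNReal.toReal_ofReal (by linarith), het, hent]
    have e1 : q * (Real.sqrt r / Real.sqrt q) = Real.sqrt q * Real.sqrt r := by
      field_simp
      nlinarith [Real.sq_sqrt hq.le]
    have e2 : r * (Real.sqrt q / Real.sqrt r) = Real.sqrt q * Real.sqrt r := by
      field_simp
      nlinarith [Real.sq_sqrt hr.le]
    have e3 : Real.sqrt q ^ 2 = q := Real.sq_sqrt hq.le
    have e4 : Real.sqrt r ^ 2 = r := Real.sq_sqrt hr.le
    simp only [smul_eq_mul]
    nlinarith [e1, e2, e3, e4]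
  -- the sum S
  set S : Ω → ℝ := ∑ j, Y j with hS_def
  have hSapp : ∀ ω, S ω = ∑ j, Y j ω := by
    intro ω; rw [hS_def]; simp
  have hSmeas : Measurable S := by
    have : S = fun ω => ∑ j, Y j ω := funext hSapp
    rw [this]
    exact Finset.measurable_sum _ (fun j _ => hYmeas j)
  have hSbound : ∀ ω, S ω ≤ n := by
    intro ω
    rw [hSapp]
    calc ∑ j : Fin n, Y j ω ≤ ∑ j : Fin n, (1:ℝ) := by
          apply Finset.sum_le_sum
          intro j _
          simp only [hY_def, hg_def, Function.comp]
          split <;> split <;> norm_num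
      _ = n := by simp
  have hint : Integrable (fun ω => Real.exp (t * S ω)) μ := by
    apply Integrable.mono' (integrable_const (Real.exp (t * n)))
    · exact ((hSmeas.const_mul t).exp).aestronglyMeasurable
    · filter_upwards with ω
      rw [Real.norm_eq_abs, abs_of_pos (Real.exp_pos _)]
      exact Real.exp_le_exp.mpr (mul_le_mul_of_nonneg_left (hSbound ω) ht)
  have hsubset : {ω | (Finset.univ.filter fun j => X j ω = v).card
      ≤ (Finset.univ.filter fun j => X j ω = u).card} ⊆ {ω | (0:ℝ) ≤ S ω} := by
    intro ω hω
    simp only [Set.mem_setOf_eq] at hω ⊢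
    have : S ω = ((Finset.univ.filter fun j => X j ω = u).card : ℝ)
        - ((Finset.univ.filter fun j => X j ω = v).card : ℝ) := by
      rw [hSapp]
      simp only [hY_def, hg_def, Function.comp]
      rw [Finset.sum_sub_distrib, Finset.sum_boole, Finset.sum_boole]
    rw [this]
    have := (Nat.cast_le (α := ℝ)).mpr hω
    linarith
  have key := measure_ge_le_exp_mul_mgf (μ := μ) (X := S) (t := t) 0 ht hint
  calc (μ {ω | (Finset.univ.filter fun j => X j ω = v).card
        ≤ (Finset.univ.filter fun j => X j ω = u).card}).toReal
      ≤ (μ {ω | (0:ℝ) ≤ S ω}).toReal :=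
        ENNReal.toReal_mono (measure_ne_top _ _) (measure_mono hsubset)
    _ ≤ Real.exp (-t * 0) * mgf S μ t := key
    _ = mgf S μ t := by simp
    _ = ∏ j : Fin n, mgf (Y j) μ t := hYindep.mgf_sum hYmeas Finset.univ
    _ = (1 - (Real.sqrt r - Real.sqrt q) ^ 2) ^ n := by
        rw [Finset.prod_congr rfl (fun j _ => hmgf j)]
        simp

theorem detection_error_probability_bound (b n : ℕ) (hb : 1 ≤ b) (p : ℕ → ℝ)
    (hp : IsSensorDist b p)
    {Ω : Type*} [MeasurableSpace Ω] (μ : Measure Ω) [IsProbabilityMeasure μ]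
    (X : Fin n → Ω → ℕ) (hXmeas : ∀ j, Measurable (X j))
    (hXindep : iIndepFun X μ)
    (hXdist : ∀ j, ∀ k ≤ 2 * b, μ {ω | X j ω = k} = ENNReal.ofReal (p k))
    (N : ℕ → Ω → ℕ)
    (hN : ∀ k ω, N k ω = (Finset.univ.filter fun j : Fin n => X j ω = k).card) :
    (μ {ω | ¬ (0 < N 0 ω ∧ ∀ i < 2 * b, N i ω < N (i + 1) ω)}).toReal ≤
      (2 * (b : ℝ) + 1) * (1 - dmin b p ^ 2) ^ n := by
  classical
  set c : ℝ := 1 - dmin b p ^ 2 with hc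
  have hdvpos : ∀ k < 2 * b + 1, 0 < dvec p k := by
    intro k hk
    by_cases h0 : k = 0
    · subst h0; simpa [dvec] using Real.sqrt_pos.mpr hp.1
    · simp only [dvec, h0, if_false, sub_pos]
      apply Real.sqrt_lt_sqrt (sensor_pos hp (k-1) (by omega)).le
      have := hp.2.1 (k - 1) (by omega)
      have hk1 : k - 1 + 1 = k := by omega
      rwa [hk1] at this
  have hdmin_pos : 0 < dmin b p := by
    rw [dmin, Finset.lt_inf'_iff]
    intro k hk
    exact hdvpos k (Finset.mem_range.mp hk)
  have hdmin_le : ∀ k < 2 * b + 1, dmin b p ≤ dvec p k := fun k hk =>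
    Finset.inf'_le _ (Finset.mem_range.mpr hk)
  have hdv_le_one : ∀ k < 2 * b + 1, dvec p k ≤ 1 := by
    intro k hk
    by_cases h0 : k = 0
    · subst h0
      simpa [dvec] using Real.sqrt_le_one.mpr (sensor_le_one hp 0 (by omega))
    · simp only [dvec, h0, if_false]
      have h1 : Real.sqrt (p k) ≤ 1 := Real.sqrt_le_one.mpr (sensor_le_one hp k (by omega))
      have h2 : 0 ≤ Real.sqrt (p (k - 1)) := Real.sqrt_nonneg _
      linarith
  have hkey : ∀ k < 2 * b + 1, (1 - dvec p k ^ 2) ^ n ≤ c ^ n := by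
    intro k hk
    apply pow_le_pow_left₀
    · have := hdv_le_one k hk
      have h2 : dvec p k ^ 2 ≤ 1 := pow_le_one₀ (hdvpos k hk).le this
      linarith
    · rw [hc]
      have : dmin b p ^ 2 ≤ dvec p k ^ 2 :=
        pow_le_pow_left₀ hdmin_pos.le (hdmin_le k hk) 2
      linarith
  set E : ℕ → Set Ω := fun k =>
    if k = 0 then {ω | N 0 ω = 0} else {ω | N k ω ≤ N (k - 1) ω} with hE
  have hsub : {ω | ¬ (0 < N 0 ω ∧ ∀ i < 2 * b, N i ω < N (i + 1) ω)}
      ⊆ ⋃ k ∈ Finset.range (2 * b + 1), E k := by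
    intro ω hω
    simp only [Set.mem_setOf_eq] at hω
    by_cases h0 : N 0 ω = 0
    · have hmem : ω ∈ E 0 := by simp [hE, h0]
      exact Set.mem_biUnion (Finset.mem_range.mpr (show 0 < 2 * b + 1 by omega)) hmem
    · push_neg at hω
      obtain ⟨i, hi, hle⟩ := hω (Nat.pos_of_ne_zero h0)
      have hmem : ω ∈ E (i + 1) := by
        simp only [hE]
        rw [if_neg (show ¬ i + 1 = 0 by omega)]
        simpa using hle
      exact Set.mem_biUnion (Finset.mem_range.mpr (show i + 1 < 2 * b + 1 by omega)) hmem
  have hEbound : ∀ k < 2 * b + 1, (μ (E k)).toReal ≤ c ^ n := by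
    intro k hk
    by_cases h0 : k = 0
    · subst h0
      have hset : E 0 = ⋂ j, {ω | X j ω ≠ 0} := by
        ext ω
        simp [hE, hN 0 ω, Finset.card_eq_zero, Finset.filter_eq_empty_iff]
      have hprod : μ (E 0) = ∏ j : Fin n, μ {ω | X j ω ≠ 0} := by
        rw [hset]
        apply hXindep.meas_iInter
        intro j
        refine ⟨{0}ᶜ, trivial, ?_⟩
        ext ω; simp
      have hcompl : ∀ j : Fin n, μ {ω | X j ω ≠ 0} = 1 - ENNReal.ofReal (p 0) := by
        intro j
        have : {ω | X j ω ≠ 0} = {ω | X j ω = 0}ᶜ := by ext ω; simp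
        have hms : MeasurableSet {ω | X j ω = 0} := hXmeas j (measurableSet_singleton 0)
        rw [this, measure_compl hms (measure_ne_top _ _),
          measure_univ, hXdist j 0 (by omega)]
      have hle1 : ENNReal.ofReal (p 0) ≤ 1 :=
        ENNReal.ofReal_le_one.mpr (sensor_le_one hp 0 (by omega))
      rw [hprod, Finset.prod_congr rfl (fun j _ => hcompl j), Finset.prod_const,
        Finset.card_univ, Fintype.card_fin, ENNReal.toReal_pow,
        ENNReal.toReal_sub_of_le hle1 ENNReal.one_ne_top, ENNReal.toReal_one,
        ENNReal.toReal_ofReal hp.1.le]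
      have h1 : 1 - p 0 = 1 - dvec p 0 ^ 2 := by
        simp [dvec, Real.sq_sqrt hp.1.le]
      rw [h1]
      exact hkey 0 (by omega)
    · have hk1 : 1 ≤ k := by omega
      have hkb : k ≤ 2 * b := by omega
      have hlt : p (k - 1) < p k := by
        have := hp.2.1 (k - 1) (by omega)
        have hk2 : k - 1 + 1 = k := by omega
        rwa [hk2] at this
      have hch := chernoff_pair μ X hXmeas hXindep (k - 1) k (by omega)
        (p (k - 1)) (p k) (sensor_pos hp (k - 1) (by omega)) hlt
        (sensor_pair_le_one hb hp hk1 hkb)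
        (fun j => hXdist j (k - 1) (by omega)) (fun j => hXdist j k hkb)
      have hset : E k = {ω | (Finset.univ.filter fun j => X j ω = k).card
          ≤ (Finset.univ.filter fun j => X j ω = k - 1).card} := by
        ext ω
        simp [hE, h0, hN k ω, hN (k - 1) ω]
      rw [hset]
      refine hch.trans ?_
      have h1 : 1 - (Real.sqrt (p k) - Real.sqrt (p (k - 1))) ^ 2 = 1 - dvec p k ^ 2 := by
        simp [dvec, h0]
      rw [h1]
      exact hkey k hk
  have hmeas_le : μ {ω | ¬ (0 < N 0 ω ∧ ∀ i < 2 * b, N i ω < N (i + 1) ω)}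
      ≤ ∑ k ∈ Finset.range (2 * b + 1), μ (E k) :=
    (measure_mono hsub).trans (measure_biUnion_finset_le _ _)
  have hfin : ∑ k ∈ Finset.range (2 * b + 1), μ (E k) ≠ ⊤ :=
    ENNReal.sum_ne_top.mpr (fun k _ => measure_ne_top _ _)
  calc (μ {ω | ¬ (0 < N 0 ω ∧ ∀ i < 2 * b, N i ω < N (i + 1) ω)}).toReal
      ≤ (∑ k ∈ Finset.range (2 * b + 1), μ (E k)).toReal :=
        ENNReal.toReal_mono hfin hmeas_le
    _ = ∑ k ∈ Finset.range (2 * b + 1), (μ (E k)).toReal :=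
        ENNReal.toReal_sum (fun k _ => measure_ne_top _ _)
    _ ≤ ∑ k ∈ Finset.range (2 * b + 1), c ^ n :=
        Finset.sum_le_sum (fun k hk => hEbound k (Finset.mem_range.mp hk))
    _ = (2 * (b : ℝ) + 1) * c ^ n := by
        rw [Finset.sum_const, Finset.card_range, nsmul_eq_mul]
        push_cast
        ring
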